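/- Let G be a group, H a subgroup, and S a finite subset of G. Partition S as S = ⨆_{g ∈ R} B_g g where R is a set of representatives for the right cosets of H in G and B_g ⊆ H. If K' ⊆ H is a finite set containing e with |K'| > 1/δ for some δ > 0, and S is (K', δ)-invariant, then the union of those pieces B_g g with 0 < |B_g| < 1/δ has total cardinality at most δ|S|. -/
import Mathlib


open Set

/-- The `K`-boundary of a subset `F` of a group `G`. -/
def kBoundary {G : Type*} [Group G] (K F : Set G) : Set G :=
  {t | (∃ k ∈ K, k * t ∈ F) ∧ (∃ k ∈ K, k * t ∉ F)}

/-- `F` is `(K, δ)`-invariant if `|∂_K F| ≤ δ |F|`. -/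
def FolnerInvariant {G : Type*} [Group G] (K F : Set G) (δ : ℝ) : Prop :=
  ((kBoundary K F).ncard : ℝ) ≤ δ * F.ncard

/-- Let `S` be a finite subset of `G` partitioned as `S = ⨆_{g ∈ R} B_g g` where the
elements of `R` represent distinct right cosets of a subgroup `H` and `B_g ⊆ H`.
If `K' ⊆ H` is finite with `e ∈ K'` and `|K'| > 1/δ`, and `S` is `(K', δ)`-invariant,
then the union of the pieces `B_g g` with `0 < |B_g| < 1/δ` has cardinality at most `δ|S|`. -/
theorem small_coset_pieces {G : Type*} [Group G] (H : Subgroup G)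
    (S : Set G) (hS : S.Finite) (R : Finset G) (B : G → Set G)
    (hBH : ∀ g ∈ R, B g ⊆ (H : Set G)) (hBfin : ∀ g ∈ R, (B g).Finite)
    (hpart : S = ⋃ g ∈ R, (fun h => h * g) '' B g)
    (hdisj : ∀ g₁ ∈ R, ∀ g₂ ∈ R, g₁ ≠ g₂ →
      Disjoint ((fun h => h * g₁) '' B g₁) ((fun h => h * g₂) '' B g₂))
    (hcosets : ∀ g₁ ∈ R, ∀ g₂ ∈ R, g₁ ≠ g₂ → g₁ * g₂⁻¹ ∉ H)
    (K' : Set G) (hK'H : K' ⊆ (H : Set G)) (hK'fin : K'.Finite) (he : (1 : G) ∈ K')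
    (δ : ℝ) (hδ : 0 < δ) (hK'big : 1 / δ < (K'.ncard : ℝ))
    (hinv : FolnerInvariant K' S δ) :
    ((⋃ g ∈ {g ∈ R | 0 < (B g).ncard ∧ ((B g).ncard : ℝ) < 1 / δ},
        (fun h => h * g) '' B g).ncard : ℝ) ≤ δ * S.ncard := by
  classical
  -- key membership characterization
  have memS : ∀ g ∈ R, ∀ h ∈ (H : Set G), (h * g ∈ S ↔ h ∈ B g) := by
    intro g hg h hh
    constructor
    · intro hmem
      rw [hpart] at hmem
      simp only [mem_iUnion, mem_image] at hmem
      obtain ⟨g', hg', b', hb', heq⟩ := hmem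
      by_cases hgg : g' = g
      · subst hgg
        have : b' = h := mul_right_cancel heq
        rwa [← this]
      · exfalso
        apply hcosets g' hg' g hg hgg
        have : g' = b'⁻¹ * (h * g) := by rw [← heq]; group
        have h2 : g' * g⁻¹ = b'⁻¹ * h := by rw [this]; group
        rw [h2]
        exact H.mul_mem (H.inv_mem (hBH g' hg' hb')) hh
    · intro hmem
      rw [hpart]
      simp only [mem_iUnion, mem_image]
      exact ⟨g, hg, h, hmem, rfl⟩
  have hsub : (⋃ g ∈ {g ∈ R | 0 < (B g).ncard ∧ ((B g).ncard : ℝ) < 1 / δ},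
      (fun h => h * g) '' B g) ⊆ kBoundary K' S := by
    intro t ht
    simp only [mem_iUnion, mem_image, Finset.mem_filter] at ht
    obtain ⟨g, ⟨hgR, hpos, hsmall⟩, b, hb, rfl⟩ := ht
    constructor
    · exact ⟨1, he, by rw [one_mul]; exact (memS g hgR b (hBH g hgR hb)).mpr hb⟩
    · by_contra hcon
      push_neg at hcon
      have hsubB : (fun k => k * b) '' K' ⊆ B g := by
        rintro _ ⟨k, hk, rfl⟩
        have hkb : k * b ∈ (H : Set G) := H.mul_mem (hK'H hk) (hBH g hgR hb)
        have := hcon k hk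
        rw [← mul_assoc] at this
        exact (memS g hgR (k * b) hkb).mp this
      have hinj : Set.InjOn (fun k => k * b) K' := fun x _ y _ h => mul_right_cancel h
      have hcard : K'.ncard ≤ (B g).ncard := by
        rw [← Set.ncard_image_of_injOn hinj]
        exact Set.ncard_le_ncard hsubB (hBfin g hgR)
      have : (K'.ncard : ℝ) ≤ (B g).ncard := Nat.cast_le.mpr hcard
      linarith
  have hbfin : (kBoundary K' S).Finite := by
    apply (hK'fin.image2 (fun k s => k⁻¹ * s) hS).subset
    rintro t ⟨⟨k, hk, hks⟩, -⟩
    exact ⟨k, hk, k * t, hks, by group⟩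
  calc ((⋃ g ∈ {g ∈ R | 0 < (B g).ncard ∧ ((B g).ncard : ℝ) < 1 / δ},
        (fun h => h * g) '' B g).ncard : ℝ)
      ≤ ((kBoundary K' S).ncard : ℝ) :=
        Nat.cast_le.mpr (Set.ncard_le_ncard hsub hbfin)
    _ ≤ δ * S.ncard := hinv
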